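/- Let G be a graph formed by taking vertex-disjoint copies of K_5, K_5 − e, and K_4, and adding a perfect matching on the set of degree-3 vertices such that matched vertices lie in different components. Then G is 4-regular and for every vertex v, the induced subgraph on the neighborhood of v contains a triangle; hence the complement of the neighborhood of v has no matching of size 2 and no vertex of G is DP-removable. -/
import Mathlib

private lemma exists_three_distinct {V : Type*} [DecidableEq V] {s : Finset V}
    (h : 3 ≤ s.card) :
    ∃ a ∈ s, ∃ b ∈ s, ∃ c ∈ s, a ≠ b ∧ a ≠ c ∧ b ≠ c := by
  obtain ⟨a, ha⟩ := Finset.card_pos.mp (show 0 < s.card by omega)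
  obtain ⟨b, hb⟩ := Finset.card_pos.mp
    (show 0 < (s.erase a).card by rw [Finset.card_erase_of_mem ha]; omega)
  obtain ⟨c, hc⟩ := Finset.card_pos.mp
    (show 0 < ((s.erase a).erase b).card by
      rw [Finset.card_erase_of_mem hb, Finset.card_erase_of_mem ha]; omega)
  obtain ⟨hba, hbs⟩ := Finset.mem_erase.mp hb
  obtain ⟨hcb, hc'⟩ := Finset.mem_erase.mp hc
  obtain ⟨hca, hcs⟩ := Finset.mem_erase.mp hc'
  exact ⟨a, ha, b, hbs, c, hcs, fun h => hba h.symm, fun h => hca h.symm, fun h => hcb h.symm⟩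

/-- Let `G` be obtained from vertex-disjoint copies of `K₅`, `K₅ − e` and `K₄`
(the parts of the partition `P`) by adding a perfect matching on the degree-3 vertices,
matched vertices lying in different parts.  Then `G` is 4-regular and the induced
neighborhood of every vertex contains a triangle; hence the complement of every
induced neighborhood has no matching of size 2 and no vertex of `G` is DP-removable. -/
theorem k5_k5e_k4_construction_irreducible {V : Type*} [Fintype V] [DecidableEq V]
    (G : SimpleGraph V) [DecidableRel G.Adj]
    (P : Finset (Finset V))
    (hcover : ∀ v : V, ∃! A, A ∈ P ∧ v ∈ A)
    (hparts : ∀ A ∈ P,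
      (A.card = 5 ∧ ∀ u ∈ A, ∀ v ∈ A, u ≠ v → G.Adj u v) ∨
      (A.card = 5 ∧ ∃ a ∈ A, ∃ b ∈ A, a ≠ b ∧ ¬ G.Adj a b ∧
        ∀ u ∈ A, ∀ v ∈ A, u ≠ v → s(u, v) ≠ s(a, b) → G.Adj u v) ∨
      (A.card = 4 ∧ ∀ u ∈ A, ∀ v ∈ A, u ≠ v → G.Adj u v))
    (hmatch : ∀ A ∈ P, ∀ v ∈ A, ∀ w, G.Adj v w → w ∉ A →
      (A.filter (G.Adj v)).card = 3 ∧ ∀ w', G.Adj v w' → w' ∉ A → w' = w)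
    (hdeg3 : ∀ A ∈ P, ∀ v ∈ A, (A.filter (G.Adj v)).card = 3 →
      ∃ w, G.Adj v w ∧ w ∉ A) :
    (∀ v : V, (G.neighborSet v).ncard = 4) ∧
    (∀ v : V, ∃ a b c : V, G.Adj v a ∧ G.Adj v b ∧ G.Adj v c ∧
      G.Adj a b ∧ G.Adj a c ∧ G.Adj b c) ∧
    (∀ v : V, ¬ ∃ u₁ w₁ u₂ w₂ : V,
      G.Adj v u₁ ∧ G.Adj v w₁ ∧ G.Adj v u₂ ∧ G.Adj v w₂ ∧
      u₁ ≠ w₁ ∧ u₂ ≠ w₂ ∧ u₁ ≠ u₂ ∧ u₁ ≠ w₂ ∧ w₁ ≠ u₂ ∧ w₁ ≠ w₂ ∧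
      ¬ G.Adj u₁ w₁ ∧ ¬ G.Adj u₂ w₂) := by
  have key : ∀ v : V, ∃ N : Finset V, (∀ u, u ∈ N ↔ G.Adj v u) ∧ N.card = 4 ∧
      ∃ a ∈ N, ∃ b ∈ N, ∃ c ∈ N, G.Adj a b ∧ G.Adj a c ∧ G.Adj b c := by
    intro v
    obtain ⟨A, ⟨hAP, hvA⟩, -⟩ := hcover v
    -- generic "degree 3 inside the part" case
    have case3 : ∀ S : Finset V, A.filter (G.Adj v) = S → S.card = 3 →
        (∀ u ∈ S, ∀ w ∈ S, u ≠ w → G.Adj u w) →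
        ∃ N : Finset V, (∀ u, u ∈ N ↔ G.Adj v u) ∧ N.card = 4 ∧
          ∃ a ∈ N, ∃ b ∈ N, ∃ c ∈ N, G.Adj a b ∧ G.Adj a c ∧ G.Adj b c := by
      intro S hS hScard hSadj
      obtain ⟨w, hw, hwA⟩ := hdeg3 A hAP v hvA (by rw [hS]; exact hScard)
      obtain ⟨-, huniq⟩ := hmatch A hAP v hvA w hw hwA
      have hSsub : S ⊆ A := hS ▸ Finset.filter_subset _ _
      have hwS : w ∉ S := fun h => hwA (hSsub h)
      refine ⟨insert w S, ?_, ?_, ?_⟩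
      · intro u
        simp only [Finset.mem_insert]
        constructor
        · rintro (rfl | hu)
          · exact hw
          · exact (Finset.mem_filter.mp (hS ▸ hu)).2
        · intro hu
          by_cases huA : u ∈ A
          · exact Or.inr (hS ▸ Finset.mem_filter.mpr ⟨huA, hu⟩)
          · exact Or.inl (huniq u hu huA)
      · rw [Finset.card_insert_of_notMem hwS, hScard]
      · obtain ⟨a, ha, b, hb, c, hc, hab, hac, hbc⟩ := exists_three_distinct (le_of_eq hScard.symm)
        exact ⟨a, Finset.mem_insert_of_mem ha, b, Finset.mem_insert_of_mem hb,
          c, Finset.mem_insert_of_mem hc, hSadj a ha b hb hab, hSadj a ha c hc hac,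
          hSadj b hb c hc hbc⟩
    -- generic "degree 4 inside the part" case
    have case4 : A.card = 5 → (∀ u ∈ A, v ≠ u → G.Adj v u) →
        (∀ S : Finset V, S ⊆ A.erase v → S.card = 3 →
          (∀ u ∈ S, ∀ w ∈ S, u ≠ w → G.Adj u w) →
        ∃ N : Finset V, (∀ u, u ∈ N ↔ G.Adj v u) ∧ N.card = 4 ∧
          ∃ a ∈ N, ∃ b ∈ N, ∃ c ∈ N, G.Adj a b ∧ G.Adj a c ∧ G.Adj b c) := by
      intro hA5 hfull S hSsub hScard hSadj
      have hfilter : A.filter (G.Adj v) = A.erase v := by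
        ext u
        simp only [Finset.mem_filter, Finset.mem_erase]
        constructor
        · rintro ⟨huA, hadj⟩; exact ⟨hadj.ne', huA⟩
        · rintro ⟨hne, huA⟩; exact ⟨huA, hfull u huA (Ne.symm hne)⟩
      have hcard4 : (A.erase v).card = 4 := by
        rw [Finset.card_erase_of_mem hvA, hA5]
      have hnoout : ∀ w, G.Adj v w → w ∈ A := by
        intro w hadj
        by_contra hwA
        have := (hmatch A hAP v hvA w hadj hwA).1
        rw [hfilter, hcard4] at this
        omega
      refine ⟨A.erase v, ?_, hcard4, ?_⟩
      · intro u
        constructor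
        · intro hu
          obtain ⟨hne, huA⟩ := Finset.mem_erase.mp hu
          exact hfull u huA (Ne.symm hne)
        · intro hadj
          exact Finset.mem_erase.mpr ⟨hadj.ne', hnoout u hadj⟩
      · obtain ⟨a, ha, b, hb, c, hc, hab, hac, hbc⟩ := exists_three_distinct (le_of_eq hScard.symm)
        exact ⟨a, hSsub ha, b, hSsub hb, c, hSsub hc, hSadj a ha b hb hab,
          hSadj a ha c hc hac, hSadj b hb c hc hbc⟩
    rcases hparts A hAP with ⟨hA5, hfull⟩ | ⟨hA5, a, haA, b, hbA, hab, hnab, hadj⟩ | ⟨hA4, hfull⟩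
    · -- K5
      obtain ⟨x, hx⟩ : (A.erase v).Nonempty :=
        Finset.card_pos.mp (by rw [Finset.card_erase_of_mem hvA, hA5]; omega)
      refine case4 hA5 (fun u hu hne => hfull v hvA u hu hne) ((A.erase v).erase x)
        (Finset.erase_subset _ _) ?_ ?_
      · rw [Finset.card_erase_of_mem hx, Finset.card_erase_of_mem hvA, hA5]
      · intro u hu w hw hne
        exact hfull u (Finset.mem_of_mem_erase (Finset.mem_of_mem_erase hu))
          w (Finset.mem_of_mem_erase (Finset.mem_of_mem_erase hw)) hne
    · -- K5 minus e
      have endpoint : ∀ y : V, y ∈ A → v ≠ y → ¬ G.Adj v y →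
          (∀ u ∈ A, ∀ w ∈ A, u ≠ w → s(u, w) ≠ s(v, y) → G.Adj u w) →
          ∃ N : Finset V, (∀ u, u ∈ N ↔ G.Adj v u) ∧ N.card = 4 ∧
            ∃ a ∈ N, ∃ b ∈ N, ∃ c ∈ N, G.Adj a b ∧ G.Adj a c ∧ G.Adj b c := by
        intro y hyA hvy hnvy hadj'
        refine case3 ((A.erase v).erase y) ?_ ?_ ?_
        · ext u
          simp only [Finset.mem_filter, Finset.mem_erase]
          constructor
          · rintro ⟨huA, hvu⟩
            exact ⟨fun h => hnvy (h ▸ hvu), hvu.ne', huA⟩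
          · rintro ⟨huy, huv, huA⟩
            refine ⟨huA, hadj' v hvA u huA (Ne.symm huv) fun hs => ?_⟩
            rcases Sym2.eq_iff.mp hs with ⟨-, rfl⟩ | ⟨rfl, -⟩
            · exact huy rfl
            · exact hvy rfl
        · rw [Finset.card_erase_of_mem (Finset.mem_erase.mpr ⟨Ne.symm hvy, hyA⟩),
            Finset.card_erase_of_mem hvA, hA5]
        · intro u hu w hw hne
          obtain ⟨huy, hu'⟩ := Finset.mem_erase.mp hu
          obtain ⟨huv, huA⟩ := Finset.mem_erase.mp hu'
          obtain ⟨hwy, hw'⟩ := Finset.mem_erase.mp hw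
          obtain ⟨hwv, hwA⟩ := Finset.mem_erase.mp hw'
          refine hadj' u huA w hwA hne fun hs => ?_
          rcases Sym2.eq_iff.mp hs with ⟨rfl, -⟩ | ⟨-, rfl⟩
          · exact huv rfl
          · exact hwv rfl
      by_cases hva : v = a
      · subst hva
        exact endpoint b hbA hab hnab hadj
      by_cases hvb : v = b
      · subst hvb
        refine endpoint a haA (Ne.symm hab) (fun h => hnab h.symm) ?_
        intro u hu w hw hne hs
        refine hadj u hu w hw hne fun hs' => ?_
        rcases Sym2.eq_iff.mp hs' with ⟨rfl, rfl⟩ | ⟨rfl, rfl⟩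
        · exact hs (Sym2.eq_swap)
        · exact hs rfl
      · -- interior vertex of K5 - e
        refine case4 hA5 ?_ ((A.erase v).erase b) (Finset.erase_subset _ _) ?_ ?_
        · intro u hu hne
          refine hadj v hvA u hu hne fun hs => ?_
          rcases Sym2.eq_iff.mp hs with ⟨rfl, -⟩ | ⟨rfl, -⟩
          · exact hva rfl
          · exact hvb rfl
        · rw [Finset.card_erase_of_mem (Finset.mem_erase.mpr ⟨fun h => hvb h.symm, hbA⟩),
            Finset.card_erase_of_mem hvA, hA5]
        · intro u hu w hw hne
          obtain ⟨hub, huA⟩ := Finset.mem_erase.mp hu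
          obtain ⟨hwb, hwA⟩ := Finset.mem_erase.mp hw
          refine hadj u (Finset.mem_of_mem_erase huA) w (Finset.mem_of_mem_erase hwA) hne
            fun hs => ?_
          rcases Sym2.eq_iff.mp hs with ⟨-, rfl⟩ | ⟨rfl, -⟩
          · exact hwb rfl
          · exact hub rfl
    · -- K4
      refine case3 (A.erase v) ?_ ?_ ?_
      · ext u
        simp only [Finset.mem_filter, Finset.mem_erase]
        constructor
        · rintro ⟨huA, hadj⟩; exact ⟨hadj.ne', huA⟩
        · rintro ⟨hne, huA⟩; exact ⟨huA, hfull v hvA u huA (Ne.symm hne)⟩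
      · rw [Finset.card_erase_of_mem hvA, hA4]
      · intro u hu w hw hne
        exact hfull u (Finset.mem_of_mem_erase hu) w (Finset.mem_of_mem_erase hw) hne
  refine ⟨?_, ?_, ?_⟩
  · intro v
    obtain ⟨N, hN, hNcard, -⟩ := key v
    have : G.neighborSet v = ↑N := by
      ext u
      simp [SimpleGraph.mem_neighborSet, hN u]
    rw [this, Set.ncard_coe_finset, hNcard]
  · intro v
    obtain ⟨N, hN, -, a, ha, b, hb, c, hc, hab, hac, hbc⟩ := key v
    exact ⟨a, b, c, (hN a).mp ha, (hN b).mp hb, (hN c).mp hc, hab, hac, hbc⟩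
  · rintro v ⟨u₁, w₁, u₂, w₂, h1, h2, h3, h4, d12, d34, d13, d14, d23, d24, n12, n34⟩
    obtain ⟨N, hN, hNcard, a, ha, b, hb, c, hc, hab, hac, hbc⟩ := key v
    have hsub : ({u₁, w₁, u₂, w₂} : Finset V) ⊆ N := by
      intro x hx
      simp only [Finset.mem_insert, Finset.mem_singleton] at hx
      rcases hx with rfl | rfl | rfl | rfl
      · exact (hN _).mpr h1
      · exact (hN _).mpr h2
      · exact (hN _).mpr h3
      · exact (hN _).mpr h4
    have hqcard : ({u₁, w₁, u₂, w₂} : Finset V).card = 4 := by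
      rw [Finset.card_insert_of_notMem (by simp [d12, d13, d14]),
        Finset.card_insert_of_notMem (by simp [d23, d24]),
        Finset.card_insert_of_notMem (by simp [d34]), Finset.card_singleton]
    have heq : N = ({u₁, w₁, u₂, w₂} : Finset V) :=
      (Finset.eq_of_subset_of_card_le hsub (by omega)).symm
    have ha' : a = u₁ ∨ a = w₁ ∨ a = u₂ ∨ a = w₂ := by
      have := heq ▸ ha; simpa using this
    have hb' : b = u₁ ∨ b = w₁ ∨ b = u₂ ∨ b = w₂ := by
      have := heq ▸ hb; simpa using this
    have hc' : c = u₁ ∨ c = w₁ ∨ c = u₂ ∨ c = w₂ := by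
      have := heq ▸ hc; simpa using this
    have n12' : ¬ G.Adj w₁ u₁ := fun h => n12 h.symm
    have n34' : ¬ G.Adj w₂ u₂ := fun h => n34 h.symm
    clear hcover hparts hmatch hdeg3 key hN hsub hqcard heq hNcard ha hb hc
      h1 h2 h3 h4 d12 d34 d13 d14 d23 d24
    rcases ha' with rfl | rfl | rfl | rfl <;> rcases hb' with rfl | rfl | rfl | rfl <;>
      rcases hc' with rfl | rfl | rfl | rfl <;> simp_all [SimpleGraph.irrefl]
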